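/- Let H be a complex Hilbert space with inner product ⟨·,·⟩ linear in the first and conjugate-linear in the second argument, let C : H → H be a bounded linear operator, σ > 0, λ* ∈ ℂ purely imaginary, and let u^0, u^1, …, u^M ∈ H with u^0 = 0. Suppose that for each p < 0 we are given: a complex number λ(p) with Re λ(p) < 0 and Re λ(p) → 0 as p → 0⁻; a bounded linear operator A_p : H → H satisfying A_p u^l = λ(p)·u^l + u^{l−1} and (A_p)* u^l = conj(λ(p))·u^l + u^{l−1} for 1 ≤ l ≤ M; and a bounded linear operator V_p : H → H satisfying the Lyapunov equation for (A_p, C, σ). Then for all 1 ≤ l, m ≤ M there exist constants K > 0 and δ > 0 such that |⟨V_p u^l, u^m⟩| ≤ K·|Re λ(p)|^{−(l+m−1)} for all p ∈ (−δ, 0). -/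

import Mathlib

open ContinuousLinearMap Filter Topology

/-- The paper's inner product `⟨x, y⟩` (linear in the first argument,
conjugate-linear in the second) equals Mathlib's `inner y x`. -/
local notation "⟪" x ", " y "⟫" => @inner ℂ _ _ x y

/-- `V` satisfies the Lyapunov equation for `(A, C, σ)`. -/
def LyapunovEq {H : Type*} [NormedAddCommGroup H] [InnerProductSpace ℂ H]
    [CompleteSpace H] (A C : H →L[ℂ] H) (σ : ℝ) (V : H →L[ℂ] H) : Prop :=
  ∀ g h : H, ⟪h, A (V g)⟫ + ⟪h, V (adjoint A g)⟫ = -(σ ^ 2 : ℂ) * ⟪h, C g⟫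

theorem statement4 {H : Type*} [NormedAddCommGroup H] [InnerProductSpace ℂ H]
    [CompleteSpace H] (C : H →L[ℂ] H) (σ : ℝ) (hσ : 0 < σ)
    (lamstar : ℂ) (hlamstar : lamstar.re = 0)
    (M : ℕ) (u : ℕ → H) (h0 : u 0 = 0)
    (lam : ℝ → ℂ) (A V : ℝ → H →L[ℂ] H)
    (hre : ∀ p < (0 : ℝ), (lam p).re < 0)
    (hlim : Tendsto (fun p => (lam p).re) (𝓝[<] (0 : ℝ)) (𝓝 0))
    (hA : ∀ p < (0 : ℝ), ∀ l, 1 ≤ l → l ≤ M →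
      A p (u l) = lam p • u l + u (l - 1))
    (hA' : ∀ p < (0 : ℝ), ∀ l, 1 ≤ l → l ≤ M →
      adjoint (A p) (u l) = (starRingEnd ℂ) (lam p) • u l + u (l - 1))
    (hV : ∀ p < (0 : ℝ), LyapunovEq (A p) C σ (V p)) :
    ∀ l m, 1 ≤ l → l ≤ M → 1 ≤ m → m ≤ M →
      ∃ K > (0 : ℝ), ∃ δ > (0 : ℝ), ∀ p, -δ < p → p < 0 →
        ‖⟪u m, V p (u l)⟫‖ ≤ K / |(lam p).re| ^ (l + m - 1) := by
  intro l m hl hlM hm hmM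
  -- a uniform bound on the norms of the `u k`
  obtain ⟨B, hB0, hB⟩ : ∃ B ≥ (0 : ℝ), ∀ k ≤ M, ‖u k‖ ≤ B := by
    refine ⟨((Finset.range (M + 1)).image fun k => ‖u k‖).max'
        ⟨‖u 0‖, Finset.mem_image_of_mem _ (Finset.mem_range.mpr (Nat.succ_pos M))⟩, ?_, ?_⟩
    · refine le_trans (norm_nonneg (u 0)) ?_
      apply Finset.le_max'
      exact Finset.mem_image_of_mem _ (Finset.mem_range.mpr (Nat.succ_pos M))
    · intro k hk
      apply Finset.le_max'
      exact Finset.mem_image_of_mem _ (Finset.mem_range.mpr (Nat.lt_succ_of_le hk))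
  -- δ₀ such that |Re λ(p)| < 1 on (-δ₀, 0)
  have h1 : {p : ℝ | |(lam p).re| < 1} ∈ 𝓝[<] (0 : ℝ) := by
    have := Metric.tendsto_nhds.mp hlim 1 one_pos
    exact (by simpa [Real.dist_eq] using this : ∀ᶠ x in 𝓝[<] (0:ℝ), |(lam x).re| < 1)
  obtain ⟨a, ha, hsub⟩ := mem_nhdsLT_iff_exists_Ioo_subset.mp h1
  have ha0 : a < 0 := ha
  set δ0 : ℝ := -a with hδ0def
  have hδ0 : 0 < δ0 := by simp [hδ0def]; linarith
  have hsmall : ∀ p, -δ0 < p → p < 0 → |(lam p).re| < 1 := by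
    intro p h1' h2'
    exact hsub ⟨by simpa [hδ0def] using h1', h2'⟩
  -- the main induction
  have key : ∀ n : ℕ, ∃ K > (0 : ℝ), ∀ l m : ℕ, l ≤ M → m ≤ M → l + m ≤ n →
      ∀ p, -δ0 < p → p < 0 →
        ‖⟪u m, V p (u l)⟫‖ ≤ K / |(lam p).re| ^ (l + m - 1) := by
    intro n
    induction n with
    | zero =>
      refine ⟨1, one_pos, ?_⟩
      intro l' m' _ _ hlm p hp1 hp2
      have hl0 : l' = 0 := by omega
      have hr0 : 0 < |(lam p).re| := abs_pos.mpr (ne_of_lt (hre p hp2))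
      subst hl0
      rw [h0, map_zero, inner_zero_right]
      rw [norm_zero]
      positivity
    | succ n ih =>
      obtain ⟨K, hK, hKb⟩ := ih
      refine ⟨K + σ ^ 2 * ‖C‖ * B ^ 2 + 1, by positivity, ?_⟩
      intro l' m' hl'M hm'M hlm p hp1 hp2
      have hr : (lam p).re < 0 := hre p hp2
      have hr0 : 0 < |(lam p).re| := abs_pos.mpr (ne_of_lt hr)
      have hr1 : |(lam p).re| < 1 := hsmall p hp1 hp2
      rcases Nat.lt_or_ge (l' + m') (n + 1) with hcase | hcase
      · calc ‖⟪u m', V p (u l')⟫‖ ≤ K / |(lam p).re| ^ (l' + m' - 1) :=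
              hKb l' m' hl'M hm'M (by omega) p hp1 hp2
          _ ≤ (K + σ ^ 2 * ‖C‖ * B ^ 2 + 1) / |(lam p).re| ^ (l' + m' - 1) := by
              gcongr
              nlinarith [norm_nonneg (C : H →L[ℂ] H), sq_nonneg σ, sq_nonneg B,
                mul_nonneg (mul_nonneg (sq_nonneg σ) (norm_nonneg (C : H →L[ℂ] H))) (sq_nonneg B)]
      have hlmeq : l' + m' = n + 1 := by omega
      rcases Nat.eq_zero_or_pos l' with hl0 | hl1
      · subst hl0
        rw [h0, map_zero, inner_zero_right]
        rw [norm_zero]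
        positivity
      rcases Nat.eq_zero_or_pos m' with hm0 | hm1
      · subst hm0
        rw [h0, inner_zero_left]
        rw [norm_zero]
        positivity
      -- the recursion step
      have heq := hV p hp2 (u l') (u m')
      rw [hA' p hp2 l' hl1 hl'M, ← adjoint_inner_left, hA' p hp2 m' hm1 hm'M,
        map_add, map_smul, inner_add_right, inner_smul_right,
        inner_add_left, inner_smul_left, Complex.conj_conj] at heq
      set w := ⟪u m', V p (u l')⟫ with hw
      set wa := ⟪u (m' - 1), V p (u l')⟫ with hwa
      set wb := ⟪u m', V p (u (l' - 1))⟫ with hwb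
      set c := ⟪u m', C (u l')⟫ with hc
      have hconj : lam p + (starRingEnd ℂ) (lam p) = 2 * ((lam p).re : ℂ) := by
        rw [Complex.add_conj]; push_cast; ring
      have h2 : (2 * ((lam p).re : ℂ)) * w = -(σ ^ 2 : ℂ) * c - wa - wb := by
        linear_combination heq - w * hconj
      have h3 : 2 * |(lam p).re| * ‖w‖
          = ‖-(σ ^ 2 : ℂ) * c - wa - wb‖ := by
        rw [← h2, norm_mul, norm_mul, Complex.norm_two, Complex.norm_real, Real.norm_eq_abs]
      have hcb : ‖c‖ ≤ ‖C‖ * B ^ 2 := by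
        calc ‖c‖ ≤ ‖u m'‖ * ‖C (u l')‖ := by
              exact norm_inner_le_norm _ _
          _ ≤ B * (‖C‖ * B) := by
              gcongr
              · exact hB m' hm'M
              · calc ‖C (u l')‖ ≤ ‖C‖ * ‖u l'‖ := le_opNorm C (u l')
                  _ ≤ ‖C‖ * B := by gcongr; exact hB l' hl'M
          _ = ‖C‖ * B ^ 2 := by ring
      have hwab : ‖wa‖ ≤ K / |(lam p).re| ^ (l' + m' - 2) := by
        have := hKb l' (m' - 1) hl'M (by omega) (by omega) p hp1 hp2
        have he : l' + (m' - 1) - 1 = l' + m' - 2 := by omega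
        rwa [he] at this
      have hwbb : ‖wb‖ ≤ K / |(lam p).re| ^ (l' + m' - 2) := by
        have := hKb (l' - 1) m' (by omega) hm'M (by omega) p hp1 hp2
        have he : l' - 1 + m' - 1 = l' + m' - 2 := by omega
        rwa [he] at this
      have h4 : 2 * |(lam p).re| * ‖w‖
          ≤ σ ^ 2 * ‖C‖ * B ^ 2 + 2 * (K / |(lam p).re| ^ (l' + m' - 2)) := by
        rw [h3]
        calc ‖-(σ ^ 2 : ℂ) * c - wa - wb‖
            ≤ ‖-(σ ^ 2 : ℂ) * c - wa‖ + ‖wb‖ := by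
              exact norm_sub_le _ _
          _ ≤ ‖-(σ ^ 2 : ℂ) * c‖ + ‖wa‖ + ‖wb‖ := by
              gcongr
              exact norm_sub_le _ _
          _ ≤ σ ^ 2 * ‖C‖ * B ^ 2 + (K / |(lam p).re| ^ (l' + m' - 2))
                + (K / |(lam p).re| ^ (l' + m' - 2)) := by
              have habsc : ‖-(σ ^ 2 : ℂ) * c‖ ≤ σ ^ 2 * ‖C‖ * B ^ 2 := by
                rw [norm_mul, norm_neg, norm_pow, Complex.norm_real, Real.norm_eq_abs,
                  abs_of_pos hσ]
                nlinarith [hcb, sq_nonneg σ]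
              exact add_le_add (add_le_add habsc hwab) hwbb
          _ = σ ^ 2 * ‖C‖ * B ^ 2 + 2 * (K / |(lam p).re| ^ (l' + m' - 2)) := by ring
      -- conclude
      set t : ℝ := |(lam p).re| ^ (l' + m' - 2) with ht
      have ht0 : 0 < t := pow_pos hr0 _
      have ht1 : t ≤ 1 := pow_le_one₀ (le_of_lt hr0) (le_of_lt hr1)
      have hpw : |(lam p).re| ^ (l' + m' - 1) = t * |(lam p).re| := by
        rw [ht, ← pow_succ]
        congr 1
        omega
      rw [hpw, le_div_iff₀ (by positivity)]
      have h4' : 2 * |(lam p).re| * ‖w‖ * t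
          ≤ σ ^ 2 * ‖C‖ * B ^ 2 * t + 2 * K := by
        have h5 := mul_le_mul_of_nonneg_right h4 (le_of_lt ht0)
        have h6 : (σ ^ 2 * ‖C‖ * B ^ 2 + 2 * (K / t)) * t
            = σ ^ 2 * ‖C‖ * B ^ 2 * t + 2 * K := by
          field_simp
        rw [h6] at h5
        exact h5
      have hCB : 0 ≤ σ ^ 2 * ‖C‖ * B ^ 2 := by positivity
      have hat : σ ^ 2 * ‖C‖ * B ^ 2 * t ≤ σ ^ 2 * ‖C‖ * B ^ 2 :=
        mul_le_of_le_one_right hCB ht1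
      linarith [h4', hat, hK]
  obtain ⟨K, hK, hKb⟩ := key (l + m)
  exact ⟨K, hK, δ0, hδ0, fun p hp1 hp2 => hKb l m hlM hmM le_rfl p hp1 hp2⟩
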